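/- Let A be a d×d positive semidefinite Hermitian matrix with ‖A‖ = σ² > 0 and let φ(θ) = e^θ − θ − 1 with θ > 0. Then exp(φ(θ)A) − I ⪯ (A/σ²)·exp(φ(θ)σ²). -/

import Mathlib

set_option maxHeartbeats 1000000
set_option synthInstance.maxHeartbeats 200000


open Matrix ComplexOrder NormedSpace

noncomputable def opNorm {d : ℕ} (A : Matrix (Fin d) (Fin d) ℂ) : ℝ :=
  ‖Matrix.toEuclideanCLM (𝕜 := ℂ) A‖

lemma re_inner_eq {d : ℕ} (A : Matrix (Fin d) (Fin d) ℂ) (v : Fin d → ℂ) :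
    (Matrix.toEuclideanCLM (𝕜 := ℂ) A).reApplyInnerSelf ((WithLp.equiv 2 _).symm v)
      = (star v ⬝ᵥ A *ᵥ v).re := by
  show RCLike.re (v ⬝ᵥ star (A *ᵥ v)) = _
  rw [dotProduct_comm, Matrix.star_dotProduct]
  simp [RCLike.star_def]

lemma posSemidef_iff_nonneg_CLM {d : ℕ} (A : Matrix (Fin d) (Fin d) ℂ) :
    A.PosSemidef ↔ 0 ≤ Matrix.toEuclideanCLM (𝕜 := ℂ) A := by
  rw [ContinuousLinearMap.nonneg_iff_isPositive]
  constructor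
  · intro hA
    constructor
    · rw [← ContinuousLinearMap.isSelfAdjoint_iff_isSymmetric, _root_.isSelfAdjoint_iff, ← map_star, Matrix.star_eq_conjTranspose, hA.1]
    · intro x
      obtain ⟨v, rfl⟩ : ∃ v, (WithLp.equiv 2 _).symm v = x := ⟨WithLp.equiv 2 _ x, rfl⟩
      rw [re_inner_eq]
      exact (Complex.nonneg_iff.mp (hA.dotProduct_mulVec_nonneg v)).1
  · intro h
    have hH : A.IsHermitian := by
      have h1 := h.1
      rw [← ContinuousLinearMap.isSelfAdjoint_iff_isSymmetric, _root_.isSelfAdjoint_iff, ← map_star, Matrix.star_eq_conjTranspose] at h1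
      exact (Matrix.toEuclideanCLM (𝕜 := ℂ) (n := Fin d)).injective h1
    refine posSemidef_iff_dotProduct_mulVec.mpr ⟨hH, fun v => ?_⟩
    rw [Complex.nonneg_iff]
    have h2 := h.2 ((WithLp.equiv 2 _).symm v)
    rw [re_inner_eq] at h2
    refine ⟨h2, ?_⟩
    have hst : star (star v ⬝ᵥ (A *ᵥ v)) = star v ⬝ᵥ (A *ᵥ v) := by
      calc star (star v ⬝ᵥ A *ᵥ v) = star (A *ᵥ v) ⬝ᵥ v := by
            rw [Matrix.star_dotProduct (v := A *ᵥ v) (w := v)]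
        _ = (star v ᵥ* Aᴴ) ⬝ᵥ v := by rw [Matrix.star_mulVec]
        _ = star v ⬝ᵥ (Aᴴ *ᵥ v) := by rw [Matrix.dotProduct_mulVec]
        _ = star v ⬝ᵥ (A *ᵥ v) := by rw [hH.eq]
    have him := congrArg Complex.im hst
    simp only [Complex.star_def, Complex.conj_im] at him
    linarith

lemma map_exp_toEuclideanCLM {d : ℕ} (M : Matrix (Fin d) (Fin d) ℂ) :
    Matrix.toEuclideanCLM (𝕜 := ℂ) (exp M) = exp (Matrix.toEuclideanCLM (𝕜 := ℂ) M) := by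
  letI : SeminormedRing (Matrix (Fin d) (Fin d) ℂ) := Matrix.linftyOpSemiNormedRing
  letI : NormedRing (Matrix (Fin d) (Fin d) ℂ) := Matrix.linftyOpNormedRing
  letI : NormedAlgebra ℂ (Matrix (Fin d) (Fin d) ℂ) := Matrix.linftyOpNormedAlgebra
  letI : NormedAlgebra ℚ (Matrix (Fin d) (Fin d) ℂ) := NormedAlgebra.restrictScalars ℚ ℂ _
  set Φ := Matrix.toEuclideanCLM (𝕜 := ℂ) (n := Fin d)
  let L : Matrix (Fin d) (Fin d) ℂ →ₗ[ℂ]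
      (EuclideanSpace ℂ (Fin d) →L[ℂ] EuclideanSpace ℂ (Fin d)) :=
    { toFun := Φ, map_add' := map_add Φ, map_smul' := map_smul Φ }
  exact map_exp Φ L.continuous_of_finiteDimensional M

lemma smul_toEuclideanCLM {d : ℕ} (r : ℝ) (M : Matrix (Fin d) (Fin d) ℂ) :
    Matrix.toEuclideanCLM (𝕜 := ℂ) (r • M) = r • Matrix.toEuclideanCLM (𝕜 := ℂ) M := by
  rw [← algebraMap_smul ℂ r M, _root_.map_smul]
  exact algebraMap_smul ℂ r (Matrix.toEuclideanCLM (𝕜 := ℂ) M)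

lemma scalar_key {c s x : ℝ} (hs : 0 < s) (hx0 : 0 ≤ x) (hxs : x ≤ s) :
    Real.exp (c * x) - 1 ≤ s⁻¹ * Real.exp (c * s) * x := by
  have ht0 : 0 ≤ x / s := div_nonneg hx0 hs.le
  have hkey : Real.exp ((1 - x/s) • (0:ℝ) + (x/s) • (c*s))
      ≤ (1 - x/s) • Real.exp 0 + (x/s) • Real.exp (c*s) :=
    convexOn_exp.2 (Set.mem_univ (0:ℝ)) (Set.mem_univ (c*s))
      (by rw [sub_nonneg]; exact (div_le_one hs).2 hxs) ht0 (by ring)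
  have heq : (1 - x/s) • (0:ℝ) + (x/s) • (c*s) = c * x := by
    rw [smul_eq_mul, smul_eq_mul, mul_zero, zero_add, div_mul_eq_mul_div, mul_div_assoc,
      mul_div_cancel_right₀ c hs.ne', mul_comm]
  rw [heq, Real.exp_zero, smul_eq_mul, smul_eq_mul, mul_one] at hkey
  have hgoal : s⁻¹ * Real.exp (c * s) * x = (x/s) * Real.exp (c*s) := by
    rw [div_eq_mul_inv]; ring
  rw [hgoal]
  linarith

theorem exp_phi_psd_loewner_bound {d : ℕ} (A : Matrix (Fin d) (Fin d) ℂ)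
    (hA : A.PosSemidef) (σ : ℝ) (hσ : 0 < σ) (hnorm : opNorm A = σ ^ 2)
    (θ : ℝ) (hθ : 0 < θ) :
    ((((σ ^ 2)⁻¹ * Real.exp ((Real.exp θ - θ - 1) * σ ^ 2)) • A)
      - (exp ((Real.exp θ - θ - 1) • A) - 1)).PosSemidef := by
  rcases Nat.eq_zero_or_pos d with hd | hd
  · subst hd
    have h0 : ((((σ ^ 2)⁻¹ * Real.exp ((Real.exp θ - θ - 1) * σ ^ 2)) • A)
      - (exp ((Real.exp θ - θ - 1) • A) - 1)) = 0 := Subsingleton.elim _ _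
    rw [h0]
    exact Matrix.PosSemidef.zero
  haveI : Nontrivial (EuclideanSpace ℂ (Fin d)) :=
    Module.nontrivial_of_finrank_pos (R := ℂ) (by rw [finrank_euclideanSpace_fin]; exact hd)
  have hs2 : (0:ℝ) < σ ^ 2 := by positivity
  set c := Real.exp θ - θ - 1 with hcdef
  set r := (σ ^ 2)⁻¹ * Real.exp (c * σ ^ 2) with hrdef
  rw [posSemidef_iff_nonneg_CLM, map_sub, map_sub, _root_.map_one, smul_toEuclideanCLM,
    map_exp_toEuclideanCLM, smul_toEuclideanCLM]
  set a := Matrix.toEuclideanCLM (𝕜 := ℂ) A with hadef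
  have ha : 0 ≤ a := (posSemidef_iff_nonneg_CLM A).mp hA
  have hsa : IsSelfAdjoint a := IsSelfAdjoint.of_nonneg ha
  have hna : ‖a‖ = σ ^ 2 := hnorm
  have hsca : IsSelfAdjoint (c • a) := by
    rw [← cfc_const_mul_id c a hsa]
    exact cfc_predicate _ a
  have hexp : exp (c • a) = cfc (fun x : ℝ => Real.exp (c * x)) a := by
    rw [← CFC.real_exp_eq_normedSpace_exp hsca,
      ← cfc_comp_smul c Real.exp a (by fun_prop) hsa]
    exact cfc_congr fun x _ => by rw [smul_eq_mul]
  have hr : r • a = cfc (fun x : ℝ => r * x) a := (cfc_const_mul_id r a hsa).symm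
  have h1 : (1 : EuclideanSpace ℂ (Fin d) →L[ℂ] EuclideanSpace ℂ (Fin d))
      = cfc (fun _ : ℝ => (1:ℝ)) a := by
    rw [cfc_const 1 a hsa, _root_.map_one]
  rw [hexp, hr, h1, ← cfc_sub _ _ a (by fun_prop) (by fun_prop),
    ← cfc_sub _ _ a (by fun_prop) (by fun_prop)]
  apply cfc_nonneg
  intro x hx
  have hx0 : 0 ≤ x := spectrum_nonneg_of_nonneg ha hx
  have hx1 : x ≤ σ ^ 2 := by
    have := spectrum.norm_le_norm_of_mem hx
    rwa [Real.norm_of_nonneg hx0, hna] at this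
  have := scalar_key (c := c) hs2 hx0 hx1
  rw [hrdef]
  linarith
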